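/- With f as above, on the unit circle one has |f(z)| ≤ C·(1/(kε) + log k + 1) for an absolute constant C > 0. -/

import Mathlib

open Real Complex

/-- The Kahane–Katznelson function built from the `k`-th roots of unity. -/
noncomputable def KKfun (k : ℕ) (ε : ℝ) (z : ℂ) : ℂ :=
  (1 / k) * ∑ j ∈ Finset.range k,
    (1 + (ε:ℂ)) / (1 + (ε:ℂ) - (starRingEnd ℂ) (Complex.exp (2 * π * Complex.I * j / k)) * z)

lemma KK_harm_aux (n : ℕ) : ∑ m ∈ Finset.range n, (1:ℝ)/(m+1) ≤ 1 + Real.log n := by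
  induction n with
  | zero => simp
  | succ n ih =>
    rw [Finset.sum_range_succ]
    rcases Nat.eq_zero_or_pos n with h | h
    · subst h; simp
    · have hn : (0:ℝ) < n := by positivity
      have key : (1:ℝ)/(n+1) ≤ Real.log (n+1) - Real.log n := by
        have h1 : Real.log ((n:ℝ)/(n+1)) ≤ (n:ℝ)/(n+1) - 1 :=
          Real.log_le_sub_one_of_pos (by positivity)
        rw [Real.log_div (by positivity) (by positivity)] at h1
        have : (n:ℝ)/(n+1) - 1 = -(1/(n+1)) := by field_simp; ring
        linarith [this ▸ h1]
      push_cast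
      linarith

lemma KK_harm_aux2 (k : ℕ) : ∑ m ∈ Finset.range k, (1:ℝ)/m ≤ 1 + Real.log k := by
  rcases Nat.eq_zero_or_pos k with h | h
  · subst h; simp
  · obtain ⟨n, rfl⟩ : ∃ n, k = n + 1 := ⟨k - 1, by omega⟩
    rw [Finset.sum_range_succ']
    have := KK_harm_aux n
    have hlog : Real.log n ≤ Real.log (n+1) := by
      rcases Nat.eq_zero_or_pos n with h0 | h0
      · subst h0; simp [Real.log_nonneg]
      · exact Real.log_le_log (by positivity) (by push_cast; linarith)
    push_cast
    simp only [one_div] at this ⊢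
    norm_num
    linarith

lemma KK_abs_sin_pi_mul (x : ℝ) : |Real.sin (π * x)| = Real.sin (π * Int.fract x) := by
  have key : ∀ (n : ℤ) (t : ℝ), 0 ≤ t → t < 1 → |Real.sin (π * ((n:ℝ) + t))| = Real.sin (π * t) := by
    intro n t h0 h1
    have hsin : Real.sin (π * (n:ℝ)) = 0 := by rw [mul_comm]; exact Real.sin_int_mul_pi _
    have heq : Real.sin (π * ((n:ℝ) + t)) = Real.cos (π * (n:ℝ)) * Real.sin (π * t) := by
      rw [mul_add, Real.sin_add, hsin]; ring
    have h2 : |Real.cos (π * (n:ℝ))| = 1 := by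
      have := Real.sin_sq_add_cos_sq (π * (n:ℝ))
      rw [hsin] at this
      rw [← Real.sqrt_sq_eq_abs, show Real.cos (π * (n:ℝ)) ^ 2 = 1 by nlinarith]
      exact Real.sqrt_one
    have h3 : 0 ≤ Real.sin (π * t) := by
      apply Real.sin_nonneg_of_nonneg_of_le_pi
      · exact mul_nonneg Real.pi_pos.le h0
      · nlinarith [Real.pi_pos]
    rw [heq, abs_mul, h2, one_mul, _root_.abs_of_nonneg h3]
  have := key ⌊x⌋ (Int.fract x) (Int.fract_nonneg x) (Int.fract_lt_one x)
  rwa [Int.floor_add_fract] at this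

lemma KK_sin_pi_fract_ge {t : ℝ} (h0 : 0 ≤ t) (h1 : t ≤ 1) : 2 * min t (1-t) ≤ Real.sin (π * t) := by
  rcases le_total t (1/2) with h | h
  · have := Real.mul_le_sin (x := π * t) (by positivity) (by nlinarith [Real.pi_pos])
    have hmin : min t (1-t) = t := min_eq_left (by linarith)
    rw [hmin]
    have hpi : (2:ℝ)/π * (π * t) = 2 * t := by field_simp
    linarith [hpi ▸ this]
  · have h2 : Real.sin (π * t) = Real.sin (π * (1 - t)) := by
      rw [show π * (1-t) = π - π * t by ring, Real.sin_pi_sub]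
    have := Real.mul_le_sin (x := π * (1-t)) (by nlinarith [Real.pi_pos]) (by nlinarith [Real.pi_pos])
    have hmin : min t (1-t) = 1 - t := min_eq_right (by linarith)
    rw [hmin, h2]
    have hpi : (2:ℝ)/π * (π * (1-t)) = 2 * (1-t) := by field_simp
    linarith [hpi ▸ this]

lemma KK_absSq (ε ψ : ℝ) :
    ‖1 + (ε:ℂ) - Complex.exp ((ψ:ℂ) * Complex.I)‖^2
      = ε^2 + 2*(1+ε)*(1 - Real.cos ψ) := by
  rw [Complex.sq_norm, Complex.exp_mul_I]
  rw [Complex.normSq_apply]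
  simp only [Complex.sub_re, Complex.add_re, Complex.one_re, Complex.ofReal_re,
    Complex.add_im, Complex.sub_im, Complex.one_im, Complex.ofReal_im,
    Complex.mul_re, Complex.mul_im, Complex.I_re, Complex.I_im,
    Complex.cos_ofReal_re, Complex.cos_ofReal_im, Complex.sin_ofReal_re, Complex.sin_ofReal_im]
  ring_nf
  nlinarith [Real.sin_sq_add_cos_sq ψ]

lemma KK_D_ge_eps {ε : ℝ} (hε : 0 ≤ ε) (ψ : ℝ) :
    ε ≤ ‖1 + (ε:ℂ) - Complex.exp ((ψ:ℂ) * Complex.I)‖ := by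
  have h := KK_absSq ε ψ
  have h2 : 0 ≤ ‖1 + (ε:ℂ) - Complex.exp ((ψ:ℂ) * Complex.I)‖ := norm_nonneg _
  nlinarith [Real.cos_le_one ψ]

lemma KK_D_ge_sin {ε : ℝ} (hε : 0 ≤ ε) (ψ : ℝ) :
    2 * |Real.sin (ψ/2)| ≤ ‖1 + (ε:ℂ) - Complex.exp ((ψ:ℂ) * Complex.I)‖ := by
  have h := KK_absSq ε ψ
  have h2 : 0 ≤ ‖1 + (ε:ℂ) - Complex.exp ((ψ:ℂ) * Complex.I)‖ := norm_nonneg _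
  have hc : Real.cos ψ = 1 - 2 * Real.sin (ψ/2)^2 := by
    have := Real.cos_two_mul (ψ/2)
    have h4 := Real.sin_sq_add_cos_sq (ψ/2)
    rw [show 2 * (ψ/2) = ψ by ring] at this
    linarith
  have hs : |Real.sin (ψ/2)|^2 = Real.sin (ψ/2)^2 := sq_abs _
  nlinarith [abs_nonneg (Real.sin (ψ/2)), Real.cos_le_one ψ]

set_option maxHeartbeats 1000000 in
/-- There is an absolute constant `C > 0` such that, for every integer `k ≥ 2`, every
`ε ∈ (0,1)` and every `z` on the unit circle, `|f(z)| ≤ C (1/(kε) + log k + 1)`. -/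
theorem KKfun_abs_upper_bound :
    ∃ C : ℝ, 0 < C ∧ ∀ (k : ℕ), 2 ≤ k → ∀ ε ∈ Set.Ioo (0:ℝ) 1, ∀ z : ℂ, ‖z‖ = 1 →
      ‖KKfun k ε z‖ ≤ C * (1 / (k * ε) + Real.log k + 1) := by
  refine ⟨4, by norm_num, ?_⟩
  intro k hk ε hε z hz
  obtain ⟨hε0, hε1⟩ := hε
  have hpi := Real.pi_pos
  have hkR : (0:ℝ) < k := by positivity
  have hk0 : (0:ℤ) < (k:ℤ) := by positivity
  set θ := Complex.arg z with hθ
  have hzeq : Complex.exp ((θ:ℂ) * Complex.I) = z := by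
    have := Complex.norm_mul_exp_arg_mul_I z
    rwa [hz, Complex.ofReal_one, one_mul] at this
  set u : ℝ := θ / (2*π) with hu
  have hθu : θ = 2*π*u := by rw [hu]; field_simp
  set n : ℤ := ⌊(k:ℝ)*u⌋ with hn
  set s : ℝ := Int.fract ((k:ℝ)*u) with hs
  have hs0 : 0 ≤ s := Int.fract_nonneg _
  have hs1 : s < 1 := Int.fract_lt_one _
  set m : ℕ → ℕ := fun j => ((n - j) % (k:ℤ)).toNat with hm
  have hmlt : ∀ j : ℕ, m j < k := by
    intro j
    have h1 := Int.emod_lt_of_pos (n - (j:ℤ)) hk0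
    have h2 := Int.emod_nonneg (n - (j:ℤ)) (by omega : (k:ℤ) ≠ 0)
    simp only [hm]
    omega
  -- fract computation
  have hfract : ∀ j : ℕ, Int.fract (u - j/k) = ((m j : ℝ) + s)/k := by
    intro j
    set r : ℤ := (n - j) % (k:ℤ) with hr
    have hr0 : 0 ≤ r := Int.emod_nonneg _ (by omega)
    have hrk : r < k := Int.emod_lt_of_pos _ hk0
    have hq : (k:ℤ) * ((n - j) / (k:ℤ)) + r = n - j := Int.mul_ediv_add_emod _ _
    have hcast : (k:ℝ) * (((n - (j:ℤ)) / (k:ℤ) : ℤ) : ℝ) + (r:ℝ) = (n:ℝ) - j := by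
      exact_mod_cast congrArg (Int.cast : ℤ → ℝ) hq
    have hns : (n : ℝ) + s = (k:ℝ) * u := by
      rw [hn, hs]; exact Int.floor_add_fract _
    have hsplit : u - j/k = (((n - j) / (k:ℤ) : ℤ) : ℝ) + ((r:ℝ) + s)/k := by
      field_simp
      nlinarith [hcast, hns]
    rw [hsplit, Int.fract_intCast_add]
    have hrtoNat : ((m j : ℕ) : ℝ) = (r : ℝ) := by
      simp only [hm, hr]
      exact_mod_cast Int.toNat_of_nonneg hr0
    rw [Int.fract_eq_self.mpr ⟨by positivity, by
      rw [div_lt_one hkR]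
      have : (r:ℝ) ≤ (k:ℝ) - 1 := by exact_mod_cast (by omega : r ≤ (k:ℤ) - 1)
      linarith⟩]
    rw [hrtoNat]
  -- the per-index bound function
  set fB : ℕ → ℝ := fun i => if i = 0 ∨ i = k - 1 then 2/ε else (k:ℝ)/(2 * min (i:ℝ) ((k:ℝ)-1-i))
    with hfB
  have hfBnonneg : ∀ i, i < k → 0 ≤ fB i := by
    intro i hi
    simp only [hfB]
    split
    · positivity
    · next hcond =>
      push_neg at hcond
      have h1 : 1 ≤ i := by omega
      have h2 : i ≤ k - 2 := by omega
      have h2' : (i:ℝ) ≤ (k:ℝ) - 2 := by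
        have : (i:ℝ) ≤ ((k-2 : ℕ):ℝ) := by exact_mod_cast h2
        have : ((k-2:ℕ):ℝ) = (k:ℝ) - 2 := by
          rw [Nat.cast_sub (by omega)]; norm_num
        linarith [‹(i:ℝ) ≤ ((k-2:ℕ):ℝ)›, this]
      have hmin : (0:ℝ) < min (i:ℝ) ((k:ℝ)-1-i) := by
        rw [lt_min_iff]
        constructor
        · exact_mod_cast h1
        · have : (1:ℝ) ≤ (i:ℝ) := by exact_mod_cast h1
          linarith
      positivity
  -- per-term bound
  have hterm : ∀ j ∈ Finset.range k,
      ‖(1 + (ε:ℂ)) / (1 + (ε:ℂ)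
        - (starRingEnd ℂ) (Complex.exp (2 * π * Complex.I * j / k)) * z)‖ ≤ fB (m j) := by
    intro j hj
    have hden : (starRingEnd ℂ) (Complex.exp (2 * π * Complex.I * j / k)) * z
        = Complex.exp ((↑(θ - 2*π*j/k) : ℂ) * Complex.I) := by
      nth_rewrite 1 [← hzeq]
      rw [← Complex.exp_conj, ← Complex.exp_add]
      congr 1
      have : (starRingEnd ℂ) (2 * (π:ℂ) * Complex.I * j / k)
          = -(2 * (π:ℂ) * Complex.I * j / k) := by
        simp [map_div₀, map_mul, Complex.conj_I, map_ofNat]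
        ring
      rw [this]
      push_cast
      ring
    rw [hden]
    set ψ : ℝ := θ - 2*π*j/k with hψ
    have hD_eps := KK_D_ge_eps hε0.le ψ
    have hD_sin := KK_D_ge_sin hε0.le ψ
    set D := ‖1 + (ε:ℂ) - Complex.exp ((ψ:ℂ)*Complex.I)‖ with hD
    have hDpos : 0 < D := lt_of_lt_of_le hε0 hD_eps
    have habs : ‖(1 + (ε:ℂ))/(1 + (ε:ℂ) - Complex.exp ((ψ:ℂ) * Complex.I))‖
        = (1+ε)/D := by
      rw [norm_div]
      congr 1
      rw [show (1 + (ε:ℂ)) = ((1+ε : ℝ) : ℂ) by push_cast; ring, Complex.norm_real, Real.norm_eq_abs,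
        _root_.abs_of_pos (by linarith)]
    rw [habs]
    have h2D : (1+ε)/D ≤ 2/D := (div_le_div_iff_of_pos_right hDpos).mpr (by linarith)
    by_cases hcase : m j = 0 ∨ m j = k - 1
    · have hfBj : fB (m j) = 2/ε := by simp only [hfB]; rw [if_pos hcase]
      rw [hfBj]
      exact h2D.trans (div_le_div_of_nonneg_left (by norm_num) hε0 hD_eps)
    · have hfBj : fB (m j) = (k:ℝ)/(2 * min ((m j):ℝ) ((k:ℝ)-1-(m j))) := by
        simp only [hfB]; rw [if_neg hcase]
      push_neg at hcase
      obtain ⟨hm0, hmk⟩ := hcase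
      have hm1 : 1 ≤ m j := by omega
      have hm2 : m j ≤ k - 2 := by have := hmlt j; omega
      have hm1R : (1:ℝ) ≤ (m j : ℝ) := by exact_mod_cast hm1
      have hm2R : (m j : ℝ) ≤ (k:ℝ) - 2 := by
        have h' : ((m j : ℕ):ℝ) ≤ ((k-2 : ℕ):ℝ) := by exact_mod_cast hm2
        have h'' : ((k-2:ℕ):ℝ) = (k:ℝ) - 2 := by rw [Nat.cast_sub (by omega)]; norm_num
        linarith [h'' ▸ h']
      set c : ℝ := min ((m j):ℝ) ((k:ℝ)-1-(m j)) with hc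
      have hcpos : 0 < c := by
        rw [hc, lt_min_iff]; constructor <;> linarith
      -- lower bound D by 4*c/k
      have hψ2 : ψ/2 = π * (u - j/k) := by rw [hψ, hθu]; field_simp
      have h1 : |Real.sin (ψ/2)| = Real.sin (π * Int.fract (u - j/k)) := by
        rw [hψ2, KK_abs_sin_pi_mul]
      rw [hfract j] at h1
      set t : ℝ := ((m j : ℝ) + s)/k with htdef
      have ht0 : 0 ≤ t := by positivity
      have ht1 : t ≤ 1 := by
        rw [htdef, div_le_one hkR]
        have : (m j : ℝ) ≤ (k:ℝ) - 1 := by linarith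
        linarith
      have hsin := KK_sin_pi_fract_ge ht0 ht1
      have hctm : c/k ≤ min t (1-t) := by
        rw [le_min_iff]
        have hcm : c ≤ (m j : ℝ) := min_le_left _ _
        have hcm2 : c ≤ (k:ℝ)-1-(m j) := min_le_right _ _
        constructor
        · rw [htdef]
          exact div_le_div_of_nonneg_right (by linarith) hkR.le
        · rw [htdef]
          rw [show (1:ℝ) - ((m j:ℝ) + s)/k = ((k:ℝ) - ((m j:ℝ) + s))/k by field_simp]
          exact div_le_div_of_nonneg_right (by linarith) hkR.le
      rw [h1] at hD_sin
      have hDc : 4*(c/k) ≤ D := by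
        have h6 : c/k ≤ min t (1-t) := hctm
        have h7 : min t (1-t) ≤ t := min_le_left _ _
        linarith [hsin]
      have hckpos : (0:ℝ) < 4*(c/k) := by positivity
      have h3D : 2/D ≤ 2/(4*(c/k)) := div_le_div_of_nonneg_left (by norm_num) hckpos hDc
      have heq : 2/(4*(c/k)) = (k:ℝ)/(2*c) := by
        field_simp
        ring
      rw [hfBj]
      linarith [heq ▸ h3D]
    
  -- assemble
  have hstep1 : ‖KKfun k ε z‖ ≤ (1/(k:ℝ)) * ∑ j ∈ Finset.range k, fB (m j) := by
    rw [KKfun, norm_mul]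
    have habs1k : ‖(1/(k:ℂ))‖ = 1/(k:ℝ) := by
      rw [norm_div, norm_one, Complex.norm_natCast]
    rw [habs1k]
    apply mul_le_mul_of_nonneg_left ?_ (by positivity)
    exact le_trans (norm_sum_le _ _) (Finset.sum_le_sum hterm)
  have hinj : ∀ j1 ∈ Finset.range k, ∀ j2 ∈ Finset.range k, m j1 = m j2 → j1 = j2 := by
    intro j1 hj1 j2 hj2 hmm
    rw [Finset.mem_range] at hj1 hj2
    have h1 : (n - j1) % (k:ℤ) = (n - j2) % (k:ℤ) := by
      have e1 := Int.toNat_of_nonneg (Int.emod_nonneg (n - (j1:ℤ)) (by omega : (k:ℤ) ≠ 0))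
      have e2 := Int.toNat_of_nonneg (Int.emod_nonneg (n - (j2:ℤ)) (by omega : (k:ℤ) ≠ 0))
      simp only [hm] at hmm
      omega
    have h2 : ((j2:ℤ) - j1) % (k:ℤ) = 0 := by
      have := Int.emod_emod_of_dvd (n - j1) (dvd_refl (k:ℤ))
      have h3 : ((n - j1) - (n - j2)) % (k:ℤ) = 0 := by
        rw [Int.sub_emod, h1, sub_self, Int.zero_emod]
      have h4 : (n - (j1:ℤ)) - (n - j2) = (j2:ℤ) - j1 := by ring
      rwa [h4] at h3
    obtain ⟨c, hc⟩ := Int.dvd_of_emod_eq_zero h2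
    have hb1 : -(k:ℤ) < (j2:ℤ) - j1 := by omega
    have hb2 : ((j2:ℤ) - j1) < k := by omega
    rw [hc] at hb1 hb2
    have hc1 : c < 1 := by nlinarith
    have hc2 : -1 < c := by nlinarith
    have : c = 0 := by omega
    rw [this, mul_zero] at hc
    omega
  have hstep2 : ∑ j ∈ Finset.range k, fB (m j) ≤ ∑ i ∈ Finset.range k, fB i := by
    rw [← Finset.sum_image hinj]
    apply Finset.sum_le_sum_of_subset_of_nonneg
    · intro i hi
      rw [Finset.mem_image] at hi
      obtain ⟨j, hj, rfl⟩ := hi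
      exact Finset.mem_range.mpr (hmlt j)
    · intro i hi _
      exact hfBnonneg i (Finset.mem_range.mp hi)
  -- bound the full sum
  have hpoint : ∀ i ∈ Finset.range k, fB i ≤
      ((if i = 0 then 2/ε else 0) + (if i = k-1 then 2/ε else 0))
        + ((k:ℝ)/(2*i) + (k:ℝ)/(2*((k-1-i : ℕ):ℝ))) := by
    intro i hi
    rw [Finset.mem_range] at hi
    by_cases hc : i = 0 ∨ i = k - 1
    · have hfBi : fB i = 2/ε := by simp only [hfB]; rw [if_pos hc]
      rw [hfBi]
      have ht3 : (0:ℝ) ≤ (k:ℝ)/(2*i) := by positivity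
      have ht4 : (0:ℝ) ≤ (k:ℝ)/(2*((k-1-i : ℕ):ℝ)) := by positivity
      rcases hc with h | h
      · rw [if_pos h]
        have hother : (0:ℝ) ≤ (if i = k-1 then 2/ε else 0) := by split <;> positivity
        linarith
      · rw [if_pos h]
        have hother : (0:ℝ) ≤ (if i = 0 then 2/ε else 0) := by split <;> positivity
        linarith
    · have hfBi : fB i = (k:ℝ)/(2 * min (i:ℝ) ((k:ℝ)-1-i)) := by
        simp only [hfB]; rw [if_neg hc]
      push_neg at hc
      obtain ⟨h0, hk1⟩ := hc
      have h1 : 1 ≤ i := by omega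
      have h2 : i ≤ k - 2 := by omega
      have h1R : (1:ℝ) ≤ (i:ℝ) := by exact_mod_cast h1
      have h2R : (i:ℝ) ≤ (k:ℝ) - 2 := by
        have h' : ((i : ℕ):ℝ) ≤ ((k-2 : ℕ):ℝ) := by exact_mod_cast h2
        have h'' : ((k-2:ℕ):ℝ) = (k:ℝ) - 2 := by rw [Nat.cast_sub (by omega)]; norm_num
        linarith [h'' ▸ h']
      have hcastsub : ((k-1-i : ℕ):ℝ) = (k:ℝ)-1-i := by
        rw [Nat.cast_sub (by omega : i ≤ k - 1), Nat.cast_sub (by omega : 1 ≤ k)]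
        norm_num
      rw [hfBi, if_neg h0, if_neg hk1, hcastsub]
      have ht3 : (0:ℝ) ≤ (k:ℝ)/(2*i) := by positivity
      have ht4 : (0:ℝ) ≤ (k:ℝ)/(2*((k:ℝ)-1-i)) := by
        apply div_nonneg (by positivity)
        linarith
      rcases min_cases ((i:ℝ)) ((k:ℝ)-1-i) with ⟨hmeq, _⟩ | ⟨hmeq, _⟩ <;> rw [hmeq] <;> linarith
  have hsum1 : ∑ i ∈ Finset.range k, (if i = 0 then 2/ε else (0:ℝ)) = 2/ε := by
    rw [Finset.sum_ite_eq' (Finset.range k) 0 (fun _ => 2/ε)]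
    rw [if_pos (Finset.mem_range.mpr (by omega))]
  have hsum2 : ∑ i ∈ Finset.range k, (if i = k-1 then 2/ε else (0:ℝ)) = 2/ε := by
    rw [Finset.sum_ite_eq' (Finset.range k) (k-1) (fun _ => 2/ε)]
    rw [if_pos (Finset.mem_range.mpr (by omega))]
  have hsum3 : ∑ i ∈ Finset.range k, (k:ℝ)/(2*i) ≤ ((k:ℝ)/2) * (1 + Real.log k) := by
    have heq : ∀ i : ℕ, (k:ℝ)/(2*i) = ((k:ℝ)/2) * (1/i) := by
      intro i
      rw [mul_one_div, div_div]
    calc ∑ i ∈ Finset.range k, (k:ℝ)/(2*i)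
        = ((k:ℝ)/2) * ∑ i ∈ Finset.range k, (1:ℝ)/i := by
          rw [Finset.mul_sum]; exact Finset.sum_congr rfl (fun i _ => heq i)
      _ ≤ ((k:ℝ)/2) * (1 + Real.log k) := by
          apply mul_le_mul_of_nonneg_left (KK_harm_aux2 k) (by positivity)
  have hsum4 : ∑ i ∈ Finset.range k, (k:ℝ)/(2*((k-1-i : ℕ):ℝ)) ≤ ((k:ℝ)/2) * (1 + Real.log k) := by
    have := Finset.sum_range_reflect (fun i => (k:ℝ)/(2*i)) k
    rw [this]
    exact hsum3
  have hstep3 : ∑ i ∈ Finset.range k, fB i ≤ 4/ε + (k:ℝ)*(1 + Real.log k) := by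
    calc ∑ i ∈ Finset.range k, fB i
        ≤ ∑ i ∈ Finset.range k, (((if i = 0 then 2/ε else 0) + (if i = k-1 then 2/ε else 0))
            + ((k:ℝ)/(2*i) + (k:ℝ)/(2*((k-1-i : ℕ):ℝ)))) := Finset.sum_le_sum hpoint
      _ = (2/ε + 2/ε) + (∑ i ∈ Finset.range k, (k:ℝ)/(2*i)
            + ∑ i ∈ Finset.range k, (k:ℝ)/(2*((k-1-i : ℕ):ℝ))) := by
          rw [Finset.sum_add_distrib, Finset.sum_add_distrib, Finset.sum_add_distrib,
            hsum1, hsum2]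
      _ ≤ (2/ε + 2/ε) + (((k:ℝ)/2) * (1 + Real.log k) + ((k:ℝ)/2) * (1 + Real.log k)) := by
          linarith
      _ = 4/ε + (k:ℝ)*(1 + Real.log k) := by ring
  have hfinal : ‖KKfun k ε z‖ ≤ 4/((k:ℝ)*ε) + (1 + Real.log k) := by
    have h5 : (1/(k:ℝ)) * (4/ε + (k:ℝ)*(1 + Real.log k)) = 4/((k:ℝ)*ε) + (1 + Real.log k) := by
      field_simp
    calc ‖KKfun k ε z‖
        ≤ (1/(k:ℝ)) * ∑ j ∈ Finset.range k, fB (m j) := hstep1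
      _ ≤ (1/(k:ℝ)) * (4/ε + (k:ℝ)*(1 + Real.log k)) := by
          apply mul_le_mul_of_nonneg_left (le_trans hstep2 hstep3) (by positivity)
      _ = 4/((k:ℝ)*ε) + (1 + Real.log k) := h5
  have hlog : 0 ≤ Real.log k := Real.log_nonneg (by exact_mod_cast Nat.one_le_of_lt hk)
  have h4e : 4/((k:ℝ)*ε) = 4 * (1/((k:ℝ)*ε)) := by ring
  calc ‖KKfun k ε z‖ ≤ 4/((k:ℝ)*ε) + (1 + Real.log k) := hfinal
    _ ≤ 4 * (1 / ((k:ℝ) * ε) + Real.log k + 1) := by rw [h4e]; linarith
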